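/- arXiv:2202.01100 — 3 statements merged into one kernel-verified Lean document; each statement's English description precedes it below -/
import Mathlib

section
/- The function f(μ, ε) = Φ(μ/2 - ε/μ) - e^ε Φ(-μ/2 - ε/μ), where Φ is the standard normal CDF, is strictly monotonically increasing in μ for μ > 0, for every fixed real ε. -/
noncomputable def stdNormalPDF (x : ℝ) : ℝ :=
  (Real.sqrt (2 * Real.pi))⁻¹ * Real.exp (-x ^ 2 / 2)

noncomputable def stdNormalCDF (x : ℝ) : ℝ := ∫ t in Set.Iic x, stdNormalPDF t

noncomputable def gaussF (μ ε : ℝ) : ℝ :=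
  stdNormalCDF (μ / 2 - ε / μ) - Real.exp ε * stdNormalCDF (-μ / 2 - ε / μ)

lemma stdNormalPDF_pos (x : ℝ) : 0 < stdNormalPDF x := by
  unfold stdNormalPDF
  positivity

lemma continuous_stdNormalPDF : Continuous stdNormalPDF := by
  unfold stdNormalPDF
  fun_prop

lemma integrable_stdNormalPDF : MeasureTheory.Integrable stdNormalPDF := by
  have h : MeasureTheory.Integrable (fun x : ℝ => Real.exp (-(2⁻¹ : ℝ) * x ^ 2)) :=
    integrable_exp_neg_mul_sq (by norm_num)
  have := h.const_mul (Real.sqrt (2 * Real.pi))⁻¹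
  refine this.congr ?_
  filter_upwards with x
  unfold stdNormalPDF
  ring_nf

lemma hasDerivAt_stdNormalCDF (x : ℝ) : HasDerivAt stdNormalCDF (stdNormalPDF x) x := by
  have hint : MeasureTheory.Integrable stdNormalPDF := integrable_stdNormalPDF
  have key : ∀ y : ℝ, stdNormalCDF y = stdNormalCDF 0 + ∫ t in (0:ℝ)..y, stdNormalPDF t := by
    intro y
    have := intervalIntegral.integral_Iic_sub_Iic (hint.integrableOn) (hint.integrableOn)
      (a := (0:ℝ)) (b := y) (f := stdNormalPDF)
    unfold stdNormalCDF
    linarith [this]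
  have hd : HasDerivAt (fun y => stdNormalCDF 0 + ∫ t in (0:ℝ)..y, stdNormalPDF t)
      (stdNormalPDF x) x := by
    have := intervalIntegral.integral_hasDerivAt_right
      (hint.intervalIntegrable (a := 0) (b := x))
      (continuous_stdNormalPDF.stronglyMeasurableAtFilter _ _)
      continuous_stdNormalPDF.continuousAt
    simpa using this
  exact hd.congr_deriv rfl |>.congr_of_eventuallyEq (by filter_upwards with y; rw [key y])

lemma pdf_identity (μ ε : ℝ) (hμ : μ ≠ 0) :
    Real.exp ε * stdNormalPDF (-μ / 2 - ε / μ) = stdNormalPDF (μ / 2 - ε / μ) := by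
  unfold stdNormalPDF
  rw [mul_comm (Real.exp ε), mul_assoc, ← Real.exp_add]
  congr 1
  field_simp
  ring

lemma hasDerivAt_gaussF (ε μ : ℝ) (hμ : 0 < μ) :
    HasDerivAt (fun μ => gaussF μ ε) (stdNormalPDF (μ / 2 - ε / μ)) μ := by
  have hμ' : μ ≠ 0 := ne_of_gt hμ
  have hdiv : HasDerivAt (fun x : ℝ => ε / x) (-(ε / μ ^ 2)) μ := by
    have := (hasDerivAt_inv hμ').const_mul ε
    simpa [div_eq_mul_inv, mul_comm, neg_div] using this
  have h1 : HasDerivAt (fun x : ℝ => x / 2 - ε / x) (1 / 2 + ε / μ ^ 2) μ := by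
    have : HasDerivAt (fun x : ℝ => x / 2 - ε / x) (1 / 2 - -(ε / μ ^ 2)) μ :=
      ((hasDerivAt_id μ).div_const 2).sub hdiv
    simpa [sub_neg_eq_add] using this
  have h2 : HasDerivAt (fun x : ℝ => -x / 2 - ε / x) (-(1 / 2) + ε / μ ^ 2) μ := by
    have : HasDerivAt (fun x : ℝ => -x / 2 - ε / x) (-1 / 2 - -(ε / μ ^ 2)) μ :=
      (((hasDerivAt_id μ).neg).div_const 2).sub hdiv
    simpa [sub_neg_eq_add, neg_div] using this
  have hc1 := (hasDerivAt_stdNormalCDF (μ / 2 - ε / μ)).comp μ h1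
  have hc2 := ((hasDerivAt_stdNormalCDF (-μ / 2 - ε / μ)).comp μ h2).const_mul (Real.exp ε)
  have : HasDerivAt (fun x => gaussF x ε) _ μ := hc1.sub hc2
  convert this using 1
  have hid := pdf_identity μ ε hμ'
  set p := stdNormalPDF (μ / 2 - ε / μ)
  set q := stdNormalPDF (-μ / 2 - ε / μ)
  rw [show Real.exp ε * (q * (-(1 / 2) + ε / μ ^ 2)) =
      (Real.exp ε * q) * (-(1 / 2) + ε / μ ^ 2) by ring, hid]
  ring

theorem gaussF_strictMonoOn_mu (ε : ℝ) :
    StrictMonoOn (fun μ => gaussF μ ε) (Set.Ioi (0 : ℝ)) := by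
  have hderiv : ∀ μ ∈ Set.Ioi (0:ℝ),
      HasDerivAt (fun μ => gaussF μ ε) (stdNormalPDF (μ / 2 - ε / μ)) μ :=
    fun μ hμ => hasDerivAt_gaussF ε μ hμ
  refine StrictMonoOn.mono (s := Set.Ioi (0:ℝ)) ?_ le_rfl
  apply strictMonoOn_of_deriv_pos (convex_Ioi 0)
  · exact fun μ hμ => (hderiv μ hμ).continuousAt.continuousWithinAt
  · intro μ hμ
    rw [interior_Ioi] at hμ
    rw [(hderiv μ hμ).deriv]
    exact stdNormalPDF_pos _
end

section
/- Let M be a randomized mechanism on discrete output space R, f : R → R' a deterministic post-processing map, and X, X' two inputs. Define for ε ∈ ℝ the quantity H_M(ε) = P(L_{M,X,X'} ≥ ε) - e^ε P(L_{M,X',X} ≤ -ε), where L_{M,X,X'} is the privacy loss random variable, i.e., the distribution of log(P(M(X)=ω)/P(M(X')=ω)) when ω ~ M(X). Then for every real ε (including negative ε), H_{f∘M}(ε) ≤ H_M(ε). -/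
open Classical in
theorem postprocessing_hockey_stick {R R' : Type*} [Countable R] [Countable R']
    (p q : R → ℝ) (hp0 : ∀ r, 0 ≤ p r) (hq0 : ∀ r, 0 ≤ q r)
    (hps : Summable p) (hqs : Summable q)
    (hp1 : ∑' r, p r = 1) (hq1 : ∑' r, q r = 1)
    (g : R → R') (ε : ℝ) :
    (∑' r' : R',
        if Real.exp ε * (∑' r : R, if g r = r' then q r else 0)
            ≤ (∑' r : R, if g r = r' then p r else 0) then
          (∑' r : R, if g r = r' then p r else 0)
            - Real.exp ε * (∑' r : R, if g r = r' then q r else 0)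
        else 0)
      ≤ ∑' r : R, if Real.exp ε * q r ≤ p r then p r - Real.exp ε * q r else 0 := by
  set φ : R → ℝ := fun r => if Real.exp ε * q r ≤ p r then p r - Real.exp ε * q r else 0 with hφ
  have hφ0 : ∀ r, 0 ≤ φ r := by
    intro r; simp only [hφ]
    split
    · linarith
    · exact le_refl 0
  have hφle : ∀ r, φ r ≤ p r := by
    intro r; simp only [hφ]
    split
    · have := mul_nonneg (Real.exp_pos ε).le (hq0 r); linarith
    · exact hp0 r
  have hφs : Summable φ := Summable.of_nonneg_of_le hφ0 hφle hps
  -- fiberwise sums of φ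
  have hfib : HasSum (fun r' : R' => ∑' r : g ⁻¹' {r'}, φ r) (∑' r, φ r) :=
    hφs.hasSum.tsum_fiberwise g
  have hFdef : ∀ r' : R', (∑' r : g ⁻¹' {r'}, φ r) = ∑' r : R, if g r = r' then φ r else 0 := by
    intro r'
    rw [tsum_subtype]
    refine tsum_congr fun r => ?_
    by_cases h : g r = r' <;> simp [Set.indicator, h]
  have hFs : Summable (fun r' : R' => ∑' r : R, if g r = r' then φ r else 0) := by
    have := hfib.summable
    simpa only [hFdef] using this
  have hFsum : (∑' r' : R', ∑' r : R, if g r = r' then φ r else 0) = ∑' r, φ r := by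
    rw [← hfib.tsum_eq]
    exact tsum_congr fun r' => (hFdef r').symm
  -- summability of fiber-restricted p and q
  have hpfib : ∀ r' : R', Summable (fun r : R => if g r = r' then p r else 0) := by
    intro r'
    refine Summable.of_nonneg_of_le (fun r => ?_) (fun r => ?_) hps
    · split <;> simp [hp0 r]
    · split <;> simp [hp0 r]
  have hqfib : ∀ r' : R', Summable (fun r : R => if g r = r' then q r else 0) := by
    intro r'
    refine Summable.of_nonneg_of_le (fun r => ?_) (fun r => ?_) hqs
    · split <;> simp [hq0 r]
    · split <;> simp [hq0 r]
  -- pointwise bound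
  have key : ∀ r' : R',
      (if Real.exp ε * (∑' r : R, if g r = r' then q r else 0)
          ≤ (∑' r : R, if g r = r' then p r else 0) then
        (∑' r : R, if g r = r' then p r else 0)
          - Real.exp ε * (∑' r : R, if g r = r' then q r else 0)
      else 0) ≤ ∑' r : R, if g r = r' then φ r else 0 := by
    intro r'
    split
    · have heq : (∑' r : R, if g r = r' then p r else 0)
          - Real.exp ε * (∑' r : R, if g r = r' then q r else 0)
          = ∑' r : R, ((if g r = r' then p r else 0) - Real.exp ε * (if g r = r' then q r else 0)) := by
        rw [Summable.tsum_sub (hpfib r') ((hqfib r').mul_left _), tsum_mul_left]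
      rw [heq]
      refine Summable.tsum_le_tsum (fun r => ?_) ((hpfib r').sub ((hqfib r').mul_left _)) ?_
      · by_cases h : g r = r'
        · simp only [h, if_true, hφ]
          split
          · exact le_refl _
          · push_neg at *; linarith
        · simp [h]
      · refine Summable.of_nonneg_of_le (fun r => ?_) (fun r => ?_) hps
        · split <;> simp [hφ0 _]
        · split
          · exact le_trans (hφle _) (le_refl _)
          · exact hp0 _
    · exact tsum_nonneg fun r => by split <;> simp [hφ0 _]
  calc (∑' r' : R',
        if Real.exp ε * (∑' r : R, if g r = r' then q r else 0)
            ≤ (∑' r : R, if g r = r' then p r else 0) then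
          (∑' r : R, if g r = r' then p r else 0)
            - Real.exp ε * (∑' r : R, if g r = r' then q r else 0)
        else 0)
      ≤ ∑' r' : R', ∑' r : R, if g r = r' then φ r else 0 := by
        refine Summable.tsum_le_tsum key ?_ hFs
        refine Summable.of_nonneg_of_le (fun r' => ?_) key hFs
        split
        · linarith [‹Real.exp ε * (∑' r : R, if g r = r' then q r else 0)
            ≤ (∑' r : R, if g r = r' then p r else 0)›]
        · exact le_refl 0
    _ = ∑' r, φ r := hFsum
end

section
/- Let β ∈ (0, 1], ε ∈ ℝ, and let L₊⁺, L₋⁺ be real-valued random variables. Define L₊ as equal to +∞ with probability 1 - β and L₊⁺ + ln β with probability β, and L₋ = L₋⁺ - ln β. Then P(L₋ ≥ ε) - e^ε P(L₊ ≤ -ε) = P(L₋⁺ ≥ ε₃) - e^{ε₃} P(L₊⁺ ≤ -ε₃), where ε₃ = ε + ln β. -/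
open MeasureTheory in
theorem mixture_plrv_decomposition_minus (β : ℝ) (hβ : β ∈ Set.Ioc (0 : ℝ) 1)
    (ε : ℝ)
    (Pp Qm : Measure ℝ) [IsProbabilityMeasure Pp] [IsProbabilityMeasure Qm] :
    let νp : Measure EReal :=
      ENNReal.ofReal (1 - β) • Measure.dirac (⊤ : EReal) +
        ENNReal.ofReal β • (Pp.map (fun x => ((x + Real.log β : ℝ) : EReal)))
    let νm : Measure ℝ := Qm.map (fun x => x - Real.log β)
    (νm (Set.Ici ε)).toReal
        - Real.exp ε * (νp {x | x ≤ ((-ε : ℝ) : EReal)}).toReal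
      = (Qm (Set.Ici (ε + Real.log β))).toReal
          - Real.exp (ε + Real.log β)
              * (Pp (Set.Iic (-(ε + Real.log β)))).toReal := by
  intro νp νm
  obtain ⟨hβ0, hβ1⟩ := hβ
  have hmeas : Measurable fun x : ℝ => ((x + Real.log β : ℝ) : EReal) :=
    (measurable_id.add_const _).coe_real_ereal
  have hS : MeasurableSet {x : EReal | x ≤ ((-ε : ℝ) : EReal)} :=
    measurableSet_Iic
  have hνm : νm (Set.Ici ε) = Qm (Set.Ici (ε + Real.log β)) := by
    rw [Measure.map_apply (by fun_prop) measurableSet_Ici]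
    congr 1
    ext x
    simp only [Set.mem_preimage, Set.mem_Ici]
    constructor <;> intro h <;> linarith
  have hdirac : Measure.dirac (⊤ : EReal) {x | x ≤ ((-ε : ℝ) : EReal)} = 0 := by
    rw [Measure.dirac_apply' _ hS]
    simp only [Set.indicator_apply, Set.mem_setOf_eq]
    rw [if_neg]
    exact fun h => absurd (top_le_iff.mp h) (EReal.coe_ne_top _)
  have hmap : (Pp.map (fun x => ((x + Real.log β : ℝ) : EReal)))
      {x | x ≤ ((-ε : ℝ) : EReal)} = Pp (Set.Iic (-(ε + Real.log β))) := by
    rw [Measure.map_apply hmeas hS]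
    congr 1
    ext x
    simp only [Set.preimage_setOf_eq, Set.mem_setOf_eq, Set.mem_Iic,
      EReal.coe_le_coe_iff]
    constructor <;> intro h <;> linarith
  have hνp : νp {x | x ≤ ((-ε : ℝ) : EReal)}
      = ENNReal.ofReal β * Pp (Set.Iic (-(ε + Real.log β))) := by
    show (ENNReal.ofReal (1 - β) • Measure.dirac (⊤ : EReal) +
        ENNReal.ofReal β • (Pp.map (fun x => ((x + Real.log β : ℝ) : EReal)))) _ = _
    rw [Measure.add_apply, Measure.smul_apply, Measure.smul_apply, hdirac, hmap]
    simp
  rw [hνm, hνp]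
  have hfin : Pp (Set.Iic (-(ε + Real.log β))) ≠ ⊤ := measure_ne_top _ _
  rw [ENNReal.toReal_mul, ENNReal.toReal_ofReal hβ0.le]
  rw [Real.exp_add, Real.exp_log hβ0]
  ring
end
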